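/- (Generalized Lazard's Trick) Let A be an AB5 abelian category, let (X_i, u_{ij} : X_i → X_j)_{i ≤ j ∈ I} and (Y_λ, v_{λμ} : Y_λ → Y_μ)_{λ ≤ μ ∈ Λ} be direct systems in A over directed sets I and Λ, with canonical colimit morphisms u_j : X_j → colim X_i and v_μ : Y_μ → colim Y_λ, and let f : colim X_i → colim Y_λ be a morphism such that for each j ∈ I there is μ = μ(j) ∈ Λ such that f ∘ u_j factors through v_μ. Suppose further that either (1) all the transition morphisms v_{λμ} are monomorphisms, or (2) all the objects X_i are finitely generated. Then there exist a directed set Ω and a direct system of morphisms (g_ω : X_ω → Y_ω)_{ω ∈ Ω} in A such that: (a) each X_ω belongs to {X_i : i ∈ I} and each Y_ω belongs to {Y_λ : λ ∈ Λ}; and (b) the morphism colim g_ω : colim X_ω → colim Y_ω is isomorphic to f in the arrow category of A. -/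

import Mathlib

open CategoryTheory Limits

universe w v u

namespace PaperStmt

variable {C : Type u} [Category.{v} C]

/-- The subcategory (object property) `B` is closed under isomorphisms. -/
def ClosedUnderIso (B : C → Prop) : Prop :=
  ∀ ⦃X Y : C⦄, (X ≅ Y) → B X → B Y

/-- `B` is closed under direct summands (retracts). -/
def ClosedUnderSummands (B : C → Prop) : Prop :=
  ∀ ⦃X Y : C⦄, B X → (∃ (s : Y ⟶ X) (r : X ⟶ Y), s ≫ r = 𝟙 Y) → B Y

/-- `f : X ⟶ A` is a `B`-precover of `A`. -/
def IsPrecover (B : C → Prop) {X A : C} (f : X ⟶ A) : Prop :=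
  B X ∧ ∀ ⦃Y : C⦄, B Y → ∀ g : Y ⟶ A, ∃ h : Y ⟶ X, h ≫ f = g

/-- `B` is a precovering subcategory. -/
def Precovering (B : C → Prop) : Prop :=
  ∀ A : C, ∃ (X : C) (f : X ⟶ A), IsPrecover B f

/-- `f : A ⟶ X` is a `B`-preenvelope of `A`. -/
def IsPreenvelope (B : C → Prop) {A X : C} (f : A ⟶ X) : Prop :=
  B X ∧ ∀ ⦃Y : C⦄, B Y → ∀ g : A ⟶ Y, ∃ h : X ⟶ Y, f ≫ h = g

/-- `B` is a preenveloping subcategory. -/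
def Preenveloping (B : C → Prop) : Prop :=
  ∀ A : C, ∃ (X : C) (f : A ⟶ X), IsPreenvelope B f

/-- `f : X ⟶ A` is a `B`-coreflection of `A`. -/
def IsCoreflection (B : C → Prop) {X A : C} (f : X ⟶ A) : Prop :=
  B X ∧ ∀ ⦃Y : C⦄, B Y → ∀ g : Y ⟶ A, ∃! h : Y ⟶ X, h ≫ f = g

/-- `B` is a coreflective subcategory: the inclusion has a right adjoint. -/
def IsCoreflectiveSub (B : C → Prop) : Prop :=
  (ObjectProperty.ι (B : ObjectProperty C)).IsLeftAdjoint

/-- `B` is a reflective subcategory: the inclusion has a left adjoint. -/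
def IsReflectiveSub (B : C → Prop) : Prop :=
  (ObjectProperty.ι (B : ObjectProperty C)).IsRightAdjoint

section Zero

variable [HasZeroMorphisms C]

/-- `k` is a pseudokernel of `f`. -/
def IsPseudokernel {K X Y : C} (f : X ⟶ Y) (k : K ⟶ X) : Prop :=
  k ≫ f = 0 ∧ ∀ ⦃K' : C⦄ (k' : K' ⟶ X), k' ≫ f = 0 → ∃ t : K' ⟶ K, t ≫ k = k'

/-- `c` is a pseudocokernel of `f`. -/
def IsPseudocokernel {X Y Q : C} (f : X ⟶ Y) (c : Y ⟶ Q) : Prop :=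
  f ≫ c = 0 ∧ ∀ ⦃Q' : C⦄ (c' : Y ⟶ Q'), f ≫ c' = 0 → ∃ t : Q ⟶ Q', c ≫ t = c'

end Zero

/-- `C` has pseudokernels. -/
def HasPseudokernels (C : Type u) [Category.{v} C] [HasZeroMorphisms C] : Prop :=
  ∀ ⦃X Y : C⦄ (f : X ⟶ Y), ∃ (K : C) (k : K ⟶ X), IsPseudokernel f k

/-- `C` has pseudocokernels. -/
def HasPseudocokernels (C : Type u) [Category.{v} C] [HasZeroMorphisms C] : Prop :=
  ∀ ⦃X Y : C⦄ (f : X ⟶ Y), ∃ (Q : C) (c : Y ⟶ Q), IsPseudocokernel f c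

end PaperStmt

namespace PaperStmt

/-- `M` is a finitely generated object: `Hom(M, −)` preserves colimits of direct systems over
directed sets whose transition morphisms are all monomorphisms. -/
def FinGenObj {A : Type u} [Category.{v} A] (M : A) : Prop :=
  ∀ (J : Type v) [Preorder J] [IsDirected J (· ≤ ·)] [Nonempty J] (D : J ⥤ A),
    (∀ ⦃a b : J⦄ (h : a ≤ b), Mono (D.map (homOfLE h))) →
    Nonempty (PreservesColimit D (coyoneda.obj (Opposite.op M)))

/-- A direct system of morphisms of `A`: a functor from a (nonempty) directed set to the
arrow category of `A`. -/
structure DirSysArrow (A : Type u) [Category.{v} A] where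
  idx : Type v
  [pre : Preorder idx]
  [dir : IsDirected idx (· ≤ ·)]
  [nem : Nonempty idx]
  diag : idx ⥤ Arrow A

attribute [instance] DirSysArrow.pre DirSysArrow.dir DirSysArrow.nem

section LazardAux

variable {A : Type u} [Category.{v} A] [Abelian A] [HasColimits A]
variable {I : Type v} [Preorder I] {Λ : Type v} [Preorder Λ]
variable (X : I ⥤ A) (Y : Λ ⥤ A) (f : colimit X ⟶ colimit Y)

/-- Nodes of the comparison system. -/
structure LNode : Type v where
  i : I
  l : Λ
  g : X.obj i ⟶ Y.obj l
  w : colimit.ι X i ≫ f = g ≫ colimit.ι Y l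

instance : Preorder (LNode X Y f) where
  le a b := ∃ (h₁ : a.i ≤ b.i) (h₂ : a.l ≤ b.l),
    X.map (homOfLE h₁) ≫ b.g = a.g ≫ Y.map (homOfLE h₂)
  le_refl a := ⟨le_rfl, le_rfl, by simp⟩
  le_trans a b c := by
    rintro ⟨h₁, h₂, hs⟩ ⟨h₁', h₂', hs'⟩
    refine ⟨h₁.trans h₁', h₂.trans h₂', ?_⟩
    rw [← homOfLE_comp h₁ h₁', ← homOfLE_comp h₂ h₂', X.map_comp, Y.map_comp,
      Category.assoc, hs', ← Category.assoc, hs, Category.assoc]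

def lnodeDiag : LNode X Y f ⥤ Arrow A where
  obj n := Arrow.mk n.g
  map {a b} h := Arrow.homMk (u := X.map (homOfLE (leOfHom h).choose))
    (v := Y.map (homOfLE (leOfHom h).choose_spec.choose))
    (leOfHom h).choose_spec.choose_spec
  map_id n := by
    apply Arrow.hom_ext
    · show X.map _ = 𝟙 _
      rw [Subsingleton.elim (homOfLE _) (𝟙 n.i), X.map_id]
    · show Y.map _ = 𝟙 _
      rw [Subsingleton.elim (homOfLE _) (𝟙 n.l), Y.map_id]
  map_comp {a b c} h h' := by
    apply Arrow.hom_ext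
    · show X.map _ = X.map _ ≫ X.map _
      rw [← X.map_comp]
      congr 1
    · show Y.map _ = Y.map _ ≫ Y.map _
      rw [← Y.map_comp]
      congr 1

def lnodeFst : LNode X Y f ⥤ I where
  obj n := n.i
  map h := homOfLE (leOfHom h).choose
  map_id _ := Subsingleton.elim _ _
  map_comp _ _ := Subsingleton.elim _ _

def lnodeSnd : LNode X Y f ⥤ Λ where
  obj n := n.l
  map h := homOfLE (leOfHom h).choose_spec.choose
  map_id _ := Subsingleton.elim _ _
  map_comp _ _ := Subsingleton.elim _ _

def lnodeDiagLeftIso : lnodeDiag X Y f ⋙ Arrow.leftFunc ≅ lnodeFst X Y f ⋙ X :=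
  NatIso.ofComponents (fun n => Iso.refl _) (by
    intro a b h
    simp only [Iso.refl_hom, Category.comp_id, Category.id_comp]
    erw [Category.comp_id, Category.id_comp]
    rfl)

def lnodeDiagRightIso : lnodeDiag X Y f ⋙ Arrow.rightFunc ≅ lnodeSnd X Y f ⋙ Y :=
  NatIso.ofComponents (fun n => Iso.refl _) (by
    intro a b h
    simp only [Iso.refl_hom, Category.comp_id, Category.id_comp]
    erw [Category.comp_id, Category.id_comp]
    rfl)

theorem lnode_key [AB5 A] [IsDirected Λ (· ≤ ·)]
    (hcase :
      (∀ ⦃l m : Λ⦄ (h : l ≤ m), Mono (Y.map (homOfLE h))) ∨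
      (∀ i : I, FinGenObj (X.obj i)))
    (i : I) (l : Λ) (d : X.obj i ⟶ Y.obj l) (hd : d ≫ colimit.ι Y l = 0) :
    ∃ (m : Λ) (hm : l ≤ m), d ≫ Y.map (homOfLE hm) = 0 := by
  classical
  -- the directed set of indices above `l`
  let J := {m : Λ // l ≤ m}
  haveI : IsDirected J (· ≤ ·) := ⟨fun a b => by
    obtain ⟨c, hc1, hc2⟩ := directed_of (· ≤ ·) a.1 b.1
    exact ⟨⟨c, a.2.trans hc1⟩, hc1, hc2⟩⟩
  haveI : Nonempty J := ⟨⟨l, le_rfl⟩⟩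
  let incl : J ⥤ Λ :=
    { obj := fun j => j.1
      map := fun {a b} h => homOfLE (leOfHom h)
      map_id := fun _ => Subsingleton.elim _ _
      map_comp := fun _ _ => Subsingleton.elim _ _ }
  haveI : incl.Final := by
    apply Functor.final_of_exists_of_isFiltered
    · intro m
      obtain ⟨c, hc1, hc2⟩ := directed_of (· ≤ ·) m l
      exact ⟨⟨c, hc2⟩, ⟨homOfLE hc1⟩⟩
    · intro d c s s'
      exact ⟨c, 𝟙 c, Subsingleton.elim _ _⟩
  -- the natural transformation from the constant functor
  let τ : (Functor.const J).obj (Y.obj l) ⟶ incl ⋙ Y :=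
    { app := fun j => Y.map (homOfLE j.2)
      naturality := fun a b h => by
        dsimp
        rw [Category.id_comp, ← Y.map_comp]
        exact congrArg Y.map (Subsingleton.elim _ _) }
  let j₀ : J := ⟨l, le_rfl⟩
  -- the retraction of the constant colimit
  let cc : Cocone ((Functor.const J).obj (Y.obj l)) :=
    { pt := Y.obj l
      ι := { app := fun _ => 𝟙 (Y.obj l), naturality := fun _ _ _ => by simp } }
  have hdesc : ∀ j : J, colimit.ι ((Functor.const J).obj (Y.obj l)) j ≫ colimit.desc _ cc =
      𝟙 (Y.obj l) := fun j => colimit.ι_desc cc j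
  have hv : colimit.ι Y l =
      colimit.ι ((Functor.const J).obj (Y.obj l)) j₀ ≫ colim.map τ ≫ colimit.pre Y incl := by
    rw [colimit.ι_map_assoc, colimit.ι_pre]
    show colimit.ι Y l = Y.map (𝟙 l) ≫ colimit.ι Y l
    rw [Y.map_id, Category.id_comp]
  rcases hcase with hmono | hfg
  · -- case of monomorphisms: `colimit.ι Y l` is a monomorphism
    haveI : ∀ j : J, Mono (τ.app j) := fun j => hmono j.2
    haveI : Mono τ := NatTrans.mono_of_mono_app τ
    haveI : Mono (colim.map τ) := colim.map_mono τ
    haveI : IsSplitMono (colimit.ι ((Functor.const J).obj (Y.obj l)) j₀) :=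
      IsSplitMono.mk' ⟨colimit.desc _ cc, hdesc j₀⟩
    haveI : Mono (colimit.ι Y l) := by rw [hv]; infer_instance
    refine ⟨l, le_rfl, ?_⟩
    show d ≫ Y.map (𝟙 l) = 0
    rw [Y.map_id, Category.comp_id]
    rw [← zero_comp (f := colimit.ι Y l)] at hd
    exact (cancel_mono _).1 hd
  · -- case of finitely generated objects: use the colimit of kernels
    let K : J ⥤ A := kernel τ
    let κ : K ⟶ (Functor.const J).obj (Y.obj l) := kernel.ι τ
    haveI hκm : ∀ j : J, Mono (κ.app j) := by
      intro j
      haveI : IsIso (kernelComparison τ ((evaluation J A).obj j)) := by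
        rw [← PreservesKernel.iso_hom]
        infer_instance
      have hcomp := kernelComparison_comp_ι τ ((evaluation J A).obj j)
      have : κ.app j = kernelComparison τ ((evaluation J A).obj j) ≫
          kernel.ι (((evaluation J A).obj j).map τ) := hcomp.symm
      rw [this]
      exact mono_comp _ _
    have hKmono : ∀ ⦃a b : J⦄ (h : a ≤ b), Mono (K.map (homOfLE h)) := by
      intro a b h
      have hnat := κ.naturality (homOfLE h)
      have : K.map (homOfLE h) ≫ κ.app b = κ.app a := by
        rw [hnat]; simp
      haveI : Mono (K.map (homOfLE h) ≫ κ.app b) := by rw [this]; exact hκm a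
      exact mono_of_mono _ (κ.app b)
    haveI := (hfg i J K hKmono).some
    -- lift `d` to the colimit of kernels
    have h0 : (d ≫ colimit.ι ((Functor.const J).obj (Y.obj l)) j₀) ≫ colim.map τ = 0 := by
      rw [hv] at hd
      haveI : IsIso (colimit.pre Y incl) := inferInstance
      have : ((d ≫ colimit.ι ((Functor.const J).obj (Y.obj l)) j₀) ≫ colim.map τ) ≫
          colimit.pre Y incl = 0 ≫ colimit.pre Y incl := by
        rw [zero_comp]
        simpa only [Category.assoc] using hd
      exact (cancel_mono (colimit.pre Y incl)).1 this
    let wlift : X.obj i ⟶ kernel (colim.map τ) :=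
      kernel.lift (colim.map τ) (d ≫ colimit.ι ((Functor.const J).obj (Y.obj l)) j₀) h0
    let dt : X.obj i ⟶ colimit K := wlift ≫ (PreservesKernel.iso colim τ).inv
    have hiso : (PreservesKernel.iso colim τ).inv ≫ colim.map κ = kernel.ι (colim.map τ) := by
      rw [Iso.inv_comp_eq, ← kernelComparison_comp_ι τ colim, PreservesKernel.iso_hom]
    have heq1 : dt ≫ colim.map κ = d ≫ colimit.ι ((Functor.const J).obj (Y.obj l)) j₀ := by
      rw [show dt = wlift ≫ (PreservesKernel.iso colim τ).inv from rfl, Category.assoc, hiso,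
        kernel.lift_ι]
    obtain ⟨j, t, ht⟩ := Types.jointly_surjective _
      (isColimitOfPreserves (coyoneda.obj (Opposite.op (X.obj i))) (colimit.isColimit K)) dt
    have ht' : t ≫ colimit.ι K j = dt := ht
    have heq2 : t ≫ κ.app j = d := by
      have : (t ≫ colimit.ι K j) ≫ colim.map κ =
          d ≫ colimit.ι ((Functor.const J).obj (Y.obj l)) j₀ := by rw [ht', heq1]
      rw [Category.assoc, colimit.ι_map] at this
      have h2 := congrArg (fun u => u ≫ colimit.desc _ cc) this
      simp only [Category.assoc, hdesc] at h2
      rw [Category.comp_id] at h2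
      have h4 : (κ.app j : K.obj j ⟶ Y.obj l) ≫ 𝟙 (Y.obj l) = κ.app j := Category.comp_id _
      rw [h4] at h2
      exact h2
    refine ⟨j.1, j.2, ?_⟩
    have : κ.app j ≫ τ.app j = 0 := by
      rw [← NatTrans.comp_app, kernel.condition, zero_app]
    show d ≫ Y.map (homOfLE j.2) = 0
    rw [← heq2, Category.assoc]
    show t ≫ κ.app j ≫ τ.app j = 0
    rw [this, comp_zero]

lemma Ymap_trans {a b c : Λ} (h1 : a ≤ b) (h2 : b ≤ c) (h3 : a ≤ c) :
    Y.map (homOfLE h1) ≫ Y.map (homOfLE h2) = Y.map (homOfLE h3) := by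
  rw [← Y.map_comp]
  exact congrArg Y.map (Subsingleton.elim _ _)

theorem lnode_key₂ [AB5 A] [IsDirected Λ (· ≤ ·)]
    (hcase :
      (∀ ⦃l m : Λ⦄ (h : l ≤ m), Mono (Y.map (homOfLE h))) ∨
      (∀ i : I, FinGenObj (X.obj i)))
    (i : I) (l : Λ) (g g' : X.obj i ⟶ Y.obj l)
    (h : g ≫ colimit.ι Y l = g' ≫ colimit.ι Y l) :
    ∃ (m : Λ) (hm : l ≤ m), g ≫ Y.map (homOfLE hm) = g' ≫ Y.map (homOfLE hm) := by
  obtain ⟨m, hm, h0⟩ := lnode_key X Y hcase i l (g - g') (by rw [Preadditive.sub_comp, h, sub_self])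
  rw [Preadditive.sub_comp, sub_eq_zero] at h0
  exact ⟨m, hm, h0⟩

end LazardAux

/-- Proposition 9.13, Generalized Lazard's Trick. -/
theorem generalized_lazard
    {A : Type u} [Category.{v} A] [Abelian A] [HasColimits A] [AB5 A]
    {I : Type v} [Preorder I] [IsDirected I (· ≤ ·)] [Nonempty I]
    {Λ : Type v} [Preorder Λ] [IsDirected Λ (· ≤ ·)] [Nonempty Λ]
    (X : I ⥤ A) (Y : Λ ⥤ A) (f : colimit X ⟶ colimit Y)
    (hfact : ∀ j : I, ∃ (μ : Λ) (g : X.obj j ⟶ Y.obj μ),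
      colimit.ι X j ≫ f = g ≫ colimit.ι Y μ)
    (hcase :
      (∀ ⦃l m : Λ⦄ (h : l ≤ m), Mono (Y.map (homOfLE h))) ∨
      (∀ i : I, FinGenObj (X.obj i))) :
    ∃ s : DirSysArrow A,
      (∀ ω : s.idx, (∃ i : I, (s.diag.obj ω).left = X.obj i) ∧
        (∃ l : Λ, (s.diag.obj ω).right = Y.obj l)) ∧
      ∃ (e₁ : colimit (s.diag ⋙ Arrow.leftFunc) ≅ colimit X)
        (e₂ : colimit (s.diag ⋙ Arrow.rightFunc) ≅ colimit Y),
        colimMap (Functor.whiskerLeft s.diag Arrow.leftToRight) ≫ e₂.hom = e₁.hom ≫ f := by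
  classical
  haveI hne : Nonempty (LNode X Y f) := by
    obtain ⟨μ, g, hg⟩ := hfact (Classical.arbitrary I)
    exact ⟨⟨_, μ, g, hg⟩⟩
  haveI hdir : IsDirected (LNode X Y f) (· ≤ ·) := by
    constructor
    intro a b
    obtain ⟨i', hai, hbi⟩ := directed_of (· ≤ ·) a.i b.i
    obtain ⟨μ, h, hh⟩ := hfact i'
    obtain ⟨l₀, hal, hbl⟩ := directed_of (· ≤ ·) a.l b.l
    obtain ⟨l', hl0, hμ⟩ := directed_of (· ≤ ·) l₀ μ
    -- square for `a` at some stage `m₁ ≥ l'`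
    have ha' : (X.map (homOfLE hai) ≫ h ≫ Y.map (homOfLE hμ)) ≫ colimit.ι Y l'
        = (a.g ≫ Y.map (homOfLE (hal.trans hl0))) ≫ colimit.ι Y l' := by
      simp only [Category.assoc, colimit.w]
      simp only [← Category.assoc]
      rw [Category.assoc, ← hh, ← Category.assoc, colimit.w X, a.w]
    obtain ⟨m₁, hm₁, hsq_a⟩ := lnode_key₂ X Y hcase a.i l' _ _ ha'
    have hsa : ∀ {m₂ : Λ} (hm₂' : m₁ ≤ m₂), X.map (homOfLE hai) ≫
          ((h ≫ Y.map (homOfLE hμ) ≫ Y.map (homOfLE hm₁)) ≫ Y.map (homOfLE hm₂'))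
        = a.g ≫ Y.map (homOfLE (((hal.trans hl0).trans hm₁).trans hm₂')) := by
      intro m₂ hm₂'
      have hthis := congrArg (· ≫ Y.map (homOfLE hm₂')) hsq_a
      simp only [Category.assoc] at hthis
      rw [← Ymap_trans Y ((hal.trans hl0).trans hm₁) hm₂'
          (((hal.trans hl0).trans hm₁).trans hm₂'),
        ← Ymap_trans Y (hal.trans hl0) hm₁ ((hal.trans hl0).trans hm₁)]
      simp only [Category.assoc]
      exact hthis
    -- square for `b` at some stage `m₂ ≥ m₁`
    have hb' : (X.map (homOfLE hbi) ≫ h ≫ Y.map (homOfLE hμ) ≫ Y.map (homOfLE hm₁))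
          ≫ colimit.ι Y m₁
        = (b.g ≫ Y.map (homOfLE ((hbl.trans hl0).trans hm₁))) ≫ colimit.ι Y m₁ := by
      simp only [Category.assoc, colimit.w]
      simp only [← Category.assoc]
      rw [Category.assoc, ← hh, ← Category.assoc, colimit.w X, b.w]
    obtain ⟨m₂, hm₂, hsq_b⟩ := lnode_key₂ X Y hcase b.i m₁ _ _ hb'
    have hsb : X.map (homOfLE hbi) ≫
          ((h ≫ Y.map (homOfLE hμ) ≫ Y.map (homOfLE hm₁)) ≫ Y.map (homOfLE hm₂))
        = b.g ≫ Y.map (homOfLE (((hbl.trans hl0).trans hm₁).trans hm₂)) := by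
      have hthis := hsq_b
      simp only [Category.assoc] at hthis
      rw [← Ymap_trans Y ((hbl.trans hl0).trans hm₁) hm₂
          (((hbl.trans hl0).trans hm₁).trans hm₂)]
      simp only [Category.assoc]
      exact hthis
    have hsa' := hsa hm₂
    refine ⟨⟨i', m₂, (h ≫ Y.map (homOfLE hμ) ≫ Y.map (homOfLE hm₁)) ≫ Y.map (homOfLE hm₂), ?_⟩,
      ⟨hai, (((hal.trans hl0).trans hm₁).trans hm₂ : a.l ≤ m₂), ?_⟩,
      ⟨hbi, (((hbl.trans hl0).trans hm₁).trans hm₂ : b.l ≤ m₂), ?_⟩⟩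
    · rw [hh]
      simp only [Category.assoc, colimit.w]
    · exact hsa'
    · exact hsb
  haveI hfinFst : (lnodeFst X Y f).Final := by
    apply Functor.final_of_exists_of_isFiltered
    · intro i
      obtain ⟨μ, g, hg⟩ := hfact i
      exact ⟨⟨i, μ, g, hg⟩, ⟨homOfLE le_rfl⟩⟩
    · intro d c s s'
      exact ⟨c, 𝟙 c, Subsingleton.elim _ _⟩
  haveI hfinSnd : (lnodeSnd X Y f).Final := by
    apply Functor.final_of_exists_of_isFiltered
    · intro l
      obtain ⟨μ, g, hg⟩ := hfact (Classical.arbitrary I)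
      obtain ⟨l'', h1, h2⟩ := directed_of (· ≤ ·) l μ
      refine ⟨⟨_, l'', g ≫ Y.map (homOfLE h2), ?_⟩, ⟨homOfLE h1⟩⟩
      rw [hg]
      simp only [Category.assoc, colimit.w]
    · intro d c s s'
      exact ⟨c, 𝟙 c, Subsingleton.elim _ _⟩
  refine ⟨{ idx := LNode X Y f, diag := lnodeDiag X Y f },
    fun ω => ⟨⟨ω.i, rfl⟩, ⟨ω.l, rfl⟩⟩, ?_⟩
  refine ⟨(HasColimit.isoOfNatIso (lnodeDiagLeftIso X Y f)) ≪≫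
      asIso (colimit.pre X (lnodeFst X Y f)),
    (HasColimit.isoOfNatIso (lnodeDiagRightIso X Y f)) ≪≫
      asIso (colimit.pre Y (lnodeSnd X Y f)), ?_⟩
  apply colimit.hom_ext
  intro n
  simp only [Iso.trans_hom, asIso_hom, Category.assoc, ι_colimMap_assoc,
    HasColimit.isoOfNatIso_ι_hom_assoc, HasColimit.isoOfNatIso_ι_hom, colimit.ι_pre,
    colimit.ι_pre_assoc, Functor.whiskerLeft_app, lnodeDiagLeftIso, lnodeDiagRightIso,
    NatIso.ofComponents_hom_app, Iso.refl_hom, Category.id_comp]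
  change n.g ≫ 𝟙 _ ≫ colimit.ι Y n.l = 𝟙 _ ≫ colimit.ι X n.i ≫ f
  simp only [Category.id_comp]
  exact n.w.symm

end PaperStmt
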